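/- Let E, F be real Banach spaces, τ : E → F a C¹ map whose derivative τ'(e) is an isomorphism for every e, and ι : F → [0,∞) a C¹ functional with ι(x) = 0 ⟺ x = 0 and ι'(x) = 0 ⟺ x = 0. If for every f ∈ F the functional φ_f(e) = ι(τ(e) − f) satisfies the Palais–Smale condition (at all levels), then τ is surjective. -/

import Mathlib

open Filter Topology

/-- Weak Ekeland variational principle for continuous nonnegative functionals. -/
lemma ekeland_weak {E : Type*} [NormedAddCommGroup E] [NormedSpace ℝ E] [CompleteSpace E]
    (φ : E → ℝ) (hc : Continuous φ) (hb : ∀ e, 0 ≤ φ e) {δ : ℝ} (hδ : 0 < δ) (x₀ : E) :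
    ∃ x : E, φ x ≤ φ x₀ ∧ ∀ y, φ x ≤ φ y + δ * dist x y := by
  classical
  set S : E → Set E := fun z => {y | φ y + δ * dist z y ≤ φ z} with hS
  have hmem : ∀ z, z ∈ S z := by intro z; simp [hS]
  have hbdd : ∀ z, BddBelow (φ '' S z) := by
    intro z; exact ⟨0, by rintro _ ⟨y, -, rfl⟩; exact hb y⟩
  have hnext : ∀ (n : ℕ) (z : E), ∃ y, y ∈ S z ∧ φ y < sInf (φ '' S z) + (1/2 : ℝ)^n := by
    intro n z
    obtain ⟨a, ⟨y, hy, rfl⟩, ha⟩ := Real.lt_sInf_add_pos (s := φ '' S z) ⟨φ z, z, hmem z, rfl⟩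
      (pow_pos (by norm_num : (0:ℝ) < 1/2) n)
    exact ⟨y, hy, ha⟩
  set x : ℕ → E := fun n => Nat.rec x₀ (fun n xn => Classical.choose (hnext n xn)) n with hx
  have hx0 : x 0 = x₀ := rfl
  have hxs : ∀ n, x (n+1) = Classical.choose (hnext n (x n)) := fun n => rfl
  have hstep : ∀ n, x (n+1) ∈ S (x n) ∧ φ (x (n+1)) < sInf (φ '' S (x n)) + (1/2:ℝ)^n := by
    intro n; rw [hxs n]; exact Classical.choose_spec (hnext n (x n))
  have hchain : ∀ n m, n ≤ m → φ (x m) + δ * dist (x n) (x m) ≤ φ (x n) := by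
    intro n m hnm
    induction m with
    | zero =>
      obtain rfl : n = 0 := Nat.le_zero.mp hnm
      simp
    | succ m ih =>
      rcases Nat.lt_or_ge n (m+1) with h | h
      · have h' := ih (Nat.lt_succ_iff.mp h)
        have h2 := (hstep m).1
        have htri : dist (x n) (x (m+1)) ≤ dist (x n) (x m) + dist (x m) (x (m+1)) :=
          dist_triangle _ _ _
        have : φ (x (m+1)) + δ * dist (x m) (x (m+1)) ≤ φ (x m) := h2
        nlinarith [hδ.le, dist_nonneg (x := x n) (y := x (m+1))]
      · obtain rfl : n = m + 1 := le_antisymm hnm h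
        simp
  have hanti : Antitone (fun n => φ (x n)) := by
    apply antitone_nat_of_succ_le
    intro n
    have := hchain n (n+1) (Nat.le_succ n)
    nlinarith [dist_nonneg (x := x n) (y := x (n+1)), hδ.le]
  have hbdd2 : BddBelow (Set.range fun n => φ (x n)) := ⟨0, by rintro _ ⟨n, rfl⟩; exact hb _⟩
  set L : ℝ := ⨅ n, φ (x n) with hL
  have hLle : ∀ n, L ≤ φ (x n) := fun n => ciInf_le hbdd2 n
  have htendL : Tendsto (fun n => φ (x n)) atTop (𝓝 L) := tendsto_atTop_ciInf hanti hbdd2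
  have hcauchy : CauchySeq x := by
    apply cauchySeq_of_le_tendsto_0 (fun N => (φ (x N) - L) / δ)
    · intro n m N hNn hNm
      wlog hnm : n ≤ m generalizing n m
      · rw [dist_comm]; exact this m n hNm hNn (le_of_not_ge hnm)
      have h1 := hchain n m hnm
      have h2 : φ (x n) ≤ φ (x N) := hanti hNn
      have h3 : L ≤ φ (x m) := hLle m
      rw [le_div_iff₀ hδ]
      nlinarith
    · have : Tendsto (fun N => φ (x N) - L) atTop (𝓝 (L - L)) := htendL.sub tendsto_const_nhds
      simpa using this.div_const δ
  obtain ⟨a, ha⟩ := cauchySeq_tendsto_of_complete hcauchy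
  have hφa : φ a = L := tendsto_nhds_unique ((hc.tendsto a).comp ha) htendL
  refine ⟨a, by rw [hφa]; exact hLle 0, ?_⟩
  intro y
  by_contra hcon
  push_neg at hcon
  rw [hφa] at hcon
  -- eventually y ∈ S (x n)
  have htd : Tendsto (fun n => φ y + δ * dist (x n) y) atTop (𝓝 (φ y + δ * dist a y)) := by
    exact tendsto_const_nhds.add (tendsto_const_nhds.mul
      (((continuous_id.dist continuous_const).tendsto a).comp ha))
  have hev : ∀ᶠ n in atTop, φ y + δ * dist (x n) y < φ (x n) := by
    exact htd.eventually_lt htendL hcon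
  have hev2 : ∀ᶠ n in atTop, φ (x (n+1)) ≤ φ y + (1/2:ℝ)^n := by
    filter_upwards [hev] with n hn
    have hyS : y ∈ S (x n) := le_of_lt hn
    have h1 : sInf (φ '' S (x n)) ≤ φ y := csInf_le (hbdd _) ⟨y, hyS, rfl⟩
    have h2 := (hstep n).2
    linarith
  have hLy : L ≤ φ y := by
    have h1 : Tendsto (fun n => φ (x (n+1))) atTop (𝓝 L) :=
      htendL.comp (tendsto_add_atTop_nat 1)
    have h2 : Tendsto (fun n => φ y + (1/2:ℝ)^n) atTop (𝓝 (φ y + 0)) :=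
      tendsto_const_nhds.add (tendsto_pow_atTop_nhds_zero_of_lt_one (by norm_num) (by norm_num))
    have := le_of_tendsto_of_tendsto h1 h2 hev2
    simpa using this
  nlinarith [dist_nonneg (x := a) (y := y), hδ.le]

/-- If `x` is an `δ`-approximate minimizer in the Ekeland sense, the gradient is small. -/
lemma grad_bound {E : Type*} [NormedAddCommGroup E] [NormedSpace ℝ E]
    (φ : E → ℝ) (hφ : Differentiable ℝ φ) {δ : ℝ} (hδ : 0 ≤ δ) (x : E)
    (h : ∀ y, φ x ≤ φ y + δ * dist x y) : ‖fderiv ℝ φ x‖ ≤ δ := by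
  apply ContinuousLinearMap.opNorm_le_bound _ hδ
  intro v
  have key : ∀ w : E, -(δ * ‖w‖) ≤ fderiv ℝ φ x w := by
    intro w
    have hline : HasDerivAt (fun t : ℝ => φ (x + t • w)) (fderiv ℝ φ x w) 0 := by
      have hc : HasDerivAt (fun t : ℝ => x + t • w) w 0 := by
        simpa using ((hasDerivAt_id (0:ℝ)).smul_const w).const_add x
      have := (hφ (x + (0:ℝ) • w)).hasFDerivAt.comp_hasDerivAt 0 hc
      rw [zero_smul, add_zero] at this; exact this
    rw [hasDerivAt_iff_tendsto_slope] at hline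
    have hline' : Tendsto (slope (fun t : ℝ => φ (x + t • w)) 0) (𝓝[>] 0)
        (𝓝 (fderiv ℝ φ x w)) :=
      hline.mono_left (nhdsWithin_mono 0 (fun t ht => ne_of_gt ht))
    refine ge_of_tendsto hline' ?_
    filter_upwards [self_mem_nhdsWithin] with t (ht : 0 < t)
    have h1 := h (x + t • w)
    have hd : dist x (x + t • w) = t * ‖w‖ := by
      rw [dist_eq_norm]
      simp [norm_smul, abs_of_pos ht]
    rw [hd] at h1
    have h0 : x + (0:ℝ) • w = x := by simp
    rw [slope_def_field, h0, sub_zero, le_div_iff₀ ht]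
    nlinarith
  have h1 := key v
  have h2 := key (-v)
  rw [map_neg, norm_neg] at h2
  rw [Real.norm_eq_abs, abs_le]
  constructor <;> nlinarith

/-- If `τ'` is everywhere invertible, `ι` vanishes (with its derivative) only
at `0`, and each functional `φ_f(e) = ι(τ(e) - f)` satisfies the Palais–Smale
condition at all levels, then `τ` is surjective. -/
theorem stmt_13 {E F : Type*} [NormedAddCommGroup E] [NormedSpace ℝ E] [CompleteSpace E]
    [NormedAddCommGroup F] [NormedSpace ℝ F] [CompleteSpace F] [Nonempty E]
    (τ : E → F) (hτ : ContDiff ℝ 1 τ)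
    (hiso : ∀ e : E, ∃ L : E ≃L[ℝ] F, (L : E →L[ℝ] F) = fderiv ℝ τ e)
    (ι : F → ℝ) (hι : ContDiff ℝ 1 ι) (hιnn : ∀ x, 0 ≤ ι x)
    (hι0 : ∀ x : F, ι x = 0 ↔ x = 0)
    (hι' : ∀ x : F, fderiv ℝ ι x = 0 ↔ x = 0)
    (hPS : ∀ f : F, ∀ c : ℝ, ∀ x : ℕ → E,
      Filter.Tendsto (fun n => ι (τ (x n) - f)) Filter.atTop (nhds c) →
      Filter.Tendsto (fun n => ‖fderiv ℝ (fun e => ι (τ e - f)) (x n)‖)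
        Filter.atTop (nhds 0) →
      ∃ g : ℕ → ℕ, StrictMono g ∧ ∃ a : E,
        Filter.Tendsto (fun n => x (g n)) Filter.atTop (nhds a)) :
    Function.Surjective τ := by
  intro f
  set φ : E → ℝ := fun e => ι (τ e - f) with hφdef
  have hφC1 : ContDiff ℝ 1 φ := hι.comp (hτ.sub contDiff_const)
  have hφd : Differentiable ℝ φ := hφC1.differentiable one_ne_zero
  have hφc : Continuous φ := hφC1.continuous
  have hφnn : ∀ e, 0 ≤ φ e := fun e => hιnn _
  have hφderiv : ∀ e, fderiv ℝ φ e = (fderiv ℝ ι (τ e - f)).comp (fderiv ℝ τ e) := by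
    intro e
    have h1 : HasFDerivAt (fun e => τ e - f) (fderiv ℝ τ e) e :=
      ((hτ.differentiable one_ne_zero) e).hasFDerivAt.sub_const f
    have h2 : HasFDerivAt ι (fderiv ℝ ι (τ e - f)) (τ e - f) :=
      ((hι.differentiable one_ne_zero) _).hasFDerivAt
    exact (h2.comp e h1).fderiv
  set c : ℝ := sInf (Set.range φ) with hc
  have hbdd : BddBelow (Set.range φ) := ⟨0, by rintro _ ⟨e, rfl⟩; exact hφnn e⟩
  have hne : (Set.range φ).Nonempty := Set.range_nonempty φ
  have hcle : ∀ e, c ≤ φ e := fun e => csInf_le hbdd (Set.mem_range_self e)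
  have H : ∀ n : ℕ, ∃ e, φ e < c + 1/(n+1 : ℝ) ∧
      ∀ y, φ e ≤ φ y + (1/(n+1 : ℝ)) * dist e y := by
    intro n
    have hpos : (0:ℝ) < 1/(n+1 : ℝ) := by positivity
    obtain ⟨_, ⟨x₀, rfl⟩, hx₀⟩ := Real.lt_sInf_add_pos hne hpos
    obtain ⟨e, he1, he2⟩ := ekeland_weak φ hφc hφnn hpos x₀
    exact ⟨e, lt_of_le_of_lt he1 hx₀, he2⟩
  choose e he1 he2 using H
  have hinv : Tendsto (fun n : ℕ => 1/(n+1 : ℝ)) atTop (𝓝 0) :=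
    tendsto_one_div_add_atTop_nhds_zero_nat
  have hupper : Tendsto (fun n : ℕ => c + 1/(n+1:ℝ)) atTop (𝓝 c) := by
    have h := (tendsto_const_nhds : Filter.Tendsto (fun _ : ℕ => c) Filter.atTop (𝓝 c)).add hinv
    simpa using h
  have h1 : Tendsto (fun n => φ (e n)) atTop (𝓝 c) :=
    tendsto_of_tendsto_of_tendsto_of_le_of_le tendsto_const_nhds hupper
      (fun n => hcle _) (fun n => (he1 n).le)
  have h2 : Tendsto (fun n => ‖fderiv ℝ φ (e n)‖) atTop (𝓝 0) := by
    apply tendsto_of_tendsto_of_tendsto_of_le_of_le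
      (tendsto_const_nhds : Tendsto (fun _ : ℕ => (0:ℝ)) atTop (𝓝 0)) hinv
    · exact fun n => norm_nonneg _
    · intro n
      exact grad_bound φ hφd (by positivity) (e n) (he2 n)
  obtain ⟨g, hg, a, ha⟩ := hPS f c e h1 h2
  have hDcont : Continuous (fderiv ℝ φ) := hφC1.continuous_fderiv one_ne_zero
  have hDa : fderiv ℝ φ a = 0 := by
    have t1 : Tendsto (fun n => ‖fderiv ℝ φ (e (g n))‖) atTop (𝓝 ‖fderiv ℝ φ a‖) :=
      ((continuous_norm.comp hDcont).tendsto a).comp ha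
    have t2 : Tendsto (fun n => ‖fderiv ℝ φ (e (g n))‖) atTop (𝓝 0) :=
      h2.comp hg.tendsto_atTop
    have : ‖fderiv ℝ φ a‖ = 0 := tendsto_nhds_unique t1 t2
    exact norm_eq_zero.mp this
  obtain ⟨L, hL⟩ := hiso a
  have hιd0 : fderiv ℝ ι (τ a - f) = 0 := by
    ext w
    have h3 : (fderiv ℝ ι (τ a - f)).comp (fderiv ℝ τ a) = 0 := by
      rw [← hφderiv a]; exact hDa
    have h4 : fderiv ℝ ι (τ a - f) (fderiv ℝ τ a (L.symm w)) = 0 := by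
      rw [← ContinuousLinearMap.comp_apply, h3]; rfl
    rw [← hL] at h4
    simpa using h4
  exact ⟨a, sub_eq_zero.mp ((hι' (τ a - f)).mp hιd0)⟩
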